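/- Let f(z) = Σ_{k≥0} a_k z^k be an analytic polynomial of one variable and let 0 < r < 1. Then Σ_{k≥0} r^{2k} | Σ_{j=0}^{k} a_j |² ≤ (1 − r²)^{−1} · (sup{ |f(z)| : |z| = 1 })². -/

import Mathlib

open Complex Finset Polynomial

noncomputable def rootP (P : ℕ) : ℂ := Complex.exp (2 * Real.pi * Complex.I / P)



lemma rootP_ne_zero (P : ℕ) : rootP P ≠ 0 := Complex.exp_ne_zero _

lemma rootP_pow_P (P : ℕ) (hP : 0 < P) : rootP P ^ P = 1 := by
  rw [rootP, ← Complex.exp_nat_mul, mul_div_cancel₀]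
  · exact Complex.exp_two_pi_mul_I
  · exact_mod_cast hP.ne'

lemma rootP_pow_ne_one (P : ℕ) (j k : ℕ) (hj : j < P) (hk : k < P) (hjk : j ≠ k) :
    rootP P ^ j ≠ rootP P ^ k := by
  intro h
  wlog hlt : k < j generalizing j k
  · exact this k j hk hj hjk.symm h.symm (by omega)
  have hPc : (P:ℂ) ≠ 0 := by exact_mod_cast (by omega : P ≠ 0)
  have h1 : rootP P ^ (j - k) = 1 := by
    have := pow_sub₀ (rootP P) (rootP_ne_zero P) hlt.le
    rw [this, h, mul_inv_cancel₀ (pow_ne_zero _ (rootP_ne_zero P))]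
  rw [rootP, ← Complex.exp_nat_mul, Complex.exp_eq_one_iff] at h1
  obtain ⟨n, hn⟩ := h1
  have h2 : ((j - k : ℕ) : ℂ) = n * P := by
    have h2pi : (2 * (Real.pi:ℂ) * Complex.I) ≠ 0 := by
      simp [Real.pi_ne_zero, Complex.I_ne_zero]
    field_simp at hn
    have hn' : ((j - k : ℕ) : ℂ) * (2 * (Real.pi:ℂ) * Complex.I) = (n * P) * (2 * (Real.pi:ℂ) * Complex.I) := by
      linear_combination (2 * (Real.pi:ℂ) * Complex.I) * hn
    exact mul_right_cancel₀ h2pi hn'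
  have h3 : ((j - k : ℕ) : ℤ) = n * P := by exact_mod_cast h2
  have h4 : 0 < ((j-k:ℕ):ℤ) := by omega
  have h5 : ((j-k:ℕ):ℤ) < P := by omega
  rcases le_or_gt n 0 with h | h
  · nlinarith [mul_le_mul_of_nonneg_right h (by positivity : (0:ℤ) ≤ P)]
  · have : (1:ℤ) ≤ n := h
    nlinarith
lemma ortho (P : ℕ) (hP : 0 < P) (j k : ℕ) (hj : j < P) (hk : k < P) :
    ∑ m ∈ range P, (rootP P ^ j * (rootP P ^ k)⁻¹) ^ m = if j = k then (P : ℂ) else 0 := by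
  rcases eq_or_ne j k with rfl | hjk
  · simp [mul_inv_cancel₀ (pow_ne_zero _ (rootP_ne_zero P))]
  · rw [if_neg hjk]
    have hne : rootP P ^ j * (rootP P ^ k)⁻¹ ≠ 1 := by
      intro h
      rw [← div_eq_mul_inv] at h
      exact rootP_pow_ne_one P j k hj hk hjk
        ((div_eq_one_iff_eq (pow_ne_zero _ (rootP_ne_zero P))).mp h)
    have hζP : (rootP P ^ j * (rootP P ^ k)⁻¹)^P = 1 := by
      rw [mul_pow, inv_pow, ← pow_mul, ← pow_mul, mul_comm j P, mul_comm k P, pow_mul, pow_mul,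
        rootP_pow_P P hP, one_pow, one_pow, inv_one, mul_one]
    rw [geom_sum_eq hne, hζP, sub_self, zero_div]

lemma conj_rootP (P : ℕ) : (starRingEnd ℂ) (rootP P) = (rootP P)⁻¹ := by
  apply eq_inv_of_mul_eq_one_right
  rw [rootP, ← Complex.exp_conj, ← Complex.exp_add]
  have : (starRingEnd ℂ) (2 * (Real.pi:ℂ) * Complex.I / P) = -(2 * (Real.pi:ℂ) * Complex.I / P) := by
    simp [map_div₀, Complex.conj_I, map_ofNat]
    ring
  rw [this, add_neg_cancel, Complex.exp_zero]

lemma ortho' (P : ℕ) (hP : 0 < P) (j k : ℕ) (hj : j < P) (hk : k < P) :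
    ∑ m ∈ range P, rootP P ^ (m * j) * ((starRingEnd ℂ) (rootP P)) ^ (m * k)
      = if j = k then (P : ℂ) else 0 := by
  rw [← ortho P hP j k hj hk]
  apply Finset.sum_congr rfl
  intro m _
  rw [conj_rootP, mul_pow, ← pow_mul, inv_pow, inv_pow, ← pow_mul, mul_comm j m, mul_comm k m]

lemma parseval (P : ℕ) (hP : 0 < P) (p : Polynomial ℂ) (hp : p.natDegree < P) (r : ℝ) :
    ∑ m ∈ range P, ‖p.eval (↑r * rootP P ^ m)‖ ^ 2
      = P * ∑ k ∈ range P, ‖p.coeff k‖ ^ 2 * r ^ (2 * k) := by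
  set ω := rootP P with hω
  apply Complex.ofReal_inj.mp
  have lhs : ((∑ m ∈ range P, ‖p.eval (↑r * ω ^ m)‖ ^ 2 : ℝ) : ℂ)
      = ∑ m ∈ range P, (p.eval (↑r * ω ^ m)) * (starRingEnd ℂ) (p.eval (↑r * ω ^ m)) := by
    push_cast [Complex.sq_norm]
    simp [Complex.mul_conj]
  rw [lhs]
  have expand : ∀ m : ℕ, p.eval (↑r * ω ^ m) = ∑ k ∈ range P, p.coeff k * (↑r * ω ^ m) ^ k :=
    fun m => Polynomial.eval_eq_sum_range' hp _
  calc ∑ m ∈ range P, (p.eval (↑r * ω ^ m)) * (starRingEnd ℂ) (p.eval (↑r * ω ^ m))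
      = ∑ m ∈ range P, ∑ j ∈ range P, ∑ k ∈ range P,
          (p.coeff j * (starRingEnd ℂ) (p.coeff k) * (↑r)^(j+k)) *
            (ω ^ (m * j) * ((starRingEnd ℂ) ω) ^ (m * k)) := by
        apply Finset.sum_congr rfl
        intro m _
        rw [expand m, map_sum, Finset.sum_mul_sum]
        apply Finset.sum_congr rfl; intro j _
        apply Finset.sum_congr rfl; intro k _
        rw [map_mul, map_pow, map_mul, Complex.conj_ofReal, map_pow]
        rw [mul_pow, mul_pow, ← pow_mul, ← pow_mul, pow_add]
        ring
    _ = ∑ j ∈ range P, ∑ k ∈ range P,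
          (p.coeff j * (starRingEnd ℂ) (p.coeff k) * (↑r)^(j+k)) *
            ∑ m ∈ range P, (ω ^ (m * j) * ((starRingEnd ℂ) ω) ^ (m * k)) := by
        rw [Finset.sum_comm]
        apply Finset.sum_congr rfl; intro j _
        rw [Finset.sum_comm]
        apply Finset.sum_congr rfl; intro k _
        rw [Finset.mul_sum]
    _ = ∑ j ∈ range P, (p.coeff j * (starRingEnd ℂ) (p.coeff j) * (↑r)^(j+j)) * P := by
        apply Finset.sum_congr rfl; intro j hj
        rw [Finset.sum_eq_single j]
        · rw [ortho' P hP j j (mem_range.mp hj) (mem_range.mp hj), if_pos rfl]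
        · intro k hk hkj
          rw [ortho' P hP j k (mem_range.mp hj) (mem_range.mp hk), if_neg hkj.symm, mul_zero]
        · intro h; exact absurd hj h
    _ = ((P : ℝ) * ∑ k ∈ range P, ‖p.coeff k‖ ^ 2 * r ^ (2 * k) : ℝ) := by
        push_cast [Complex.sq_norm]
        rw [Finset.mul_sum]
        apply Finset.sum_congr rfl; intro j _
        rw [Complex.mul_conj, two_mul]
        ring

lemma abs_rootP (P : ℕ) : ‖rootP P‖ = 1 := by
  rw [rootP]
  have h : 2 * (Real.pi:ℂ) * Complex.I / P = ((2 * Real.pi / P : ℝ) : ℂ) * Complex.I := by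
    push_cast; ring
  rw [h, Complex.norm_exp_ofReal_mul_I]

/-- `f(z) = Σ_{k ≤ d} a_k z^k`. -/
noncomputable def polyEval1 (d : ℕ) (a : ℕ → ℂ) (z : ℂ) : ℂ :=
  ∑ k ∈ Finset.range (d + 1), a k * z ^ k

/-- `sup { |f(z)| : |z| = 1 }`. -/
noncomputable def supNormT1 (d : ℕ) (a : ℕ → ℂ) : ℝ :=
  sSup {x : ℝ | ∃ z : ℂ, ‖z‖ = 1 ∧ x = ‖polyEval1 d a z‖}


section
variable (d : ℕ) (a : ℕ → ℂ) (ha : ∀ k : ℕ, d < k → a k = 0)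

noncomputable def pPoly : Polynomial ℂ := ∑ k ∈ range (d + 1), Polynomial.C (a k) * Polynomial.X ^ k

lemma pPoly_eval (z : ℂ) : (pPoly d a).eval z = polyEval1 d a z := by
  simp [pPoly, polyEval1, eval_finset_sum]

lemma pPoly_coeff (ha : ∀ k : ℕ, d < k → a k = 0) (n : ℕ) : (pPoly d a).coeff n = a n := by
  rw [pPoly, finset_sum_coeff]
  simp only [coeff_C_mul, coeff_X_pow]
  rcases le_or_gt n d with h | h
  · rw [Finset.sum_eq_single n]
    · simp
    · intro k _ hk; simp [Ne.symm hk]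
    · intro hn; exact absurd (mem_range.mpr (by omega)) hn
  · rw [Finset.sum_eq_zero, ha n h]
    intro k hk
    have : n ≠ k := by have := mem_range.mp hk; omega
    simp [this]

lemma pPoly_natDegree : (pPoly d a).natDegree ≤ d := by
  apply Polynomial.natDegree_sum_le_of_forall_le
  intro k hk
  exact le_trans (Polynomial.natDegree_C_mul_X_pow_le _ _) (by have := mem_range.mp hk; omega)

lemma bddAbove_normSet : BddAbove {x : ℝ | ∃ z : ℂ, ‖z‖ = 1 ∧ x = ‖polyEval1 d a z‖} := by
  have : {x : ℝ | ∃ z : ℂ, ‖z‖ = 1 ∧ x = ‖polyEval1 d a z‖}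
      = (fun z => ‖polyEval1 d a z‖) '' (Metric.sphere (0:ℂ) 1) := by
    ext x
    simp only [Set.mem_setOf_eq, Set.mem_image, mem_sphere_zero_iff_norm]
    constructor
    · rintro ⟨z, hz, rfl⟩; exact ⟨z, hz, rfl⟩
    · rintro ⟨z, hz, rfl⟩; exact ⟨z, hz, rfl⟩
  rw [this]
  apply (isCompact_sphere (0:ℂ) 1).bddAbove_image
  apply Continuous.continuousOn
  have hc : Continuous (polyEval1 d a) := by
    unfold polyEval1
    exact continuous_finset_sum _ (fun k _ => by continuity)
  exact continuous_norm.comp hc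

lemma le_supNorm (z : ℂ) (hz : ‖z‖ = 1) :
    ‖polyEval1 d a z‖ ≤ supNormT1 d a :=
  le_csSup (bddAbove_normSet d a) ⟨z, hz, rfl⟩

lemma supNorm_nonneg : 0 ≤ supNormT1 d a :=
  le_trans (norm_nonneg _) (le_supNorm d a 1 (by simp))

lemma maxmod (z : ℂ) (hz : ‖z‖ < 1) :
    ‖(pPoly d a).eval z‖ ≤ supNormT1 d a := by
  have hdiff : DiffContOnCl ℂ (fun w => (pPoly d a).eval w) (Metric.ball (0:ℂ) 1) :=
    (Polynomial.differentiable _).diffContOnCl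
  have := Complex.norm_le_of_forall_mem_frontier_norm_le
    (Metric.isBounded_ball (x := (0:ℂ)) (r := 1)) hdiff
    (C := supNormT1 d a) ?_ (z := z) ?_
  · exact this
  · intro w hw
    rw [frontier_ball (0:ℂ) one_ne_zero, mem_sphere_zero_iff_norm] at hw
    rw [pPoly_eval]
    exact le_supNorm d a w hw
  · exact subset_closure (by simpa [Metric.mem_ball, Complex.dist_eq] using hz)

end


noncomputable def qPoly (N : ℕ) : Polynomial ℂ := ∑ i ∈ range (N + 1), Polynomial.X ^ i

lemma qPoly_coeff (N k : ℕ) : (qPoly N).coeff k = if k ≤ N then 1 else 0 := by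
  rw [qPoly, finset_sum_coeff]
  simp only [coeff_X_pow]
  rw [Finset.sum_ite_eq (range (N+1)) k (fun _ => (1:ℂ))]
  simp [Nat.lt_succ_iff]

lemma qPoly_natDegree (N : ℕ) : (qPoly N).natDegree ≤ N := by
  apply Polynomial.natDegree_sum_le_of_forall_le
  intro i hi
  rw [Polynomial.natDegree_X_pow]
  exact Nat.lt_succ_iff.mp (mem_range.mp hi)

lemma gPoly_coeff (d : ℕ) (a : ℕ → ℂ) (ha : ∀ k : ℕ, d < k → a k = 0) (N k : ℕ) (hk : k ≤ N) :
    (pPoly d a * qPoly N).coeff k = ∑ j ∈ range (k + 1), a j := by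
  rw [Polynomial.coeff_mul, Finset.Nat.sum_antidiagonal_eq_sum_range_succ_mk]
  apply Finset.sum_congr rfl
  intro i hi
  rw [pPoly_coeff d a ha, qPoly_coeff, if_pos (by omega), mul_one]

lemma geom_bound (r : ℝ) (hr0 : 0 < r) (hr1 : r < 1) (n : ℕ) :
    ∑ k ∈ range n, (r ^ 2) ^ k ≤ (1 - r ^ 2)⁻¹ := by
  have h0 : (0:ℝ) ≤ r ^ 2 := sq_nonneg r
  have h1 : r ^ 2 < 1 := by nlinarith
  have hs : Summable (fun k : ℕ => (r ^ 2) ^ k) := summable_geometric_of_lt_one h0 h1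
  calc ∑ k ∈ range n, (r ^ 2) ^ k ≤ ∑' k : ℕ, (r ^ 2) ^ k :=
        Summable.sum_le_tsum _ (fun i _ => by positivity) hs
    _ = (1 - r ^ 2)⁻¹ := tsum_geometric_of_lt_one h0 h1

lemma core (d : ℕ) (a : ℕ → ℂ) (ha : ∀ k : ℕ, d < k → a k = 0)
    (r : ℝ) (hr0 : 0 < r) (hr1 : r < 1) (N : ℕ) :
    ∑ k ∈ range (N + 1), r ^ (2 * k) * (‖∑ j ∈ Finset.range (k + 1), a j‖) ^ 2 ≤
      (1 - r ^ 2)⁻¹ * (supNormT1 d a) ^ 2 := by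
  set M := supNormT1 d a with hM
  set P := d + N + 1 with hPdef
  have hP : 0 < P := by omega
  set g := pPoly d a * qPoly N with hg
  have hgdeg : g.natDegree < P :=
    lt_of_le_of_lt (natDegree_mul_le.trans (add_le_add (pPoly_natDegree d a) (qPoly_natDegree N))) (by omega)
  have hqdeg : (qPoly N).natDegree < P := lt_of_le_of_lt (qPoly_natDegree N) (by omega)
  have hpar_g := parseval P hP g hgdeg r
  have hpar_q := parseval P hP (qPoly N) hqdeg r
  have step1 : ∑ k ∈ range (N + 1), r ^ (2 * k) * (‖∑ j ∈ Finset.range (k + 1), a j‖) ^ 2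
      ≤ ∑ k ∈ range P, ‖g.coeff k‖ ^ 2 * r ^ (2 * k) := by
    have hcg : ∀ k ∈ range (N + 1),
        r ^ (2 * k) * (‖∑ j ∈ Finset.range (k + 1), a j‖) ^ 2
        = ‖g.coeff k‖ ^ 2 * r ^ (2 * k) := by
      intro k hk
      rw [hg, gPoly_coeff d a ha N k (Nat.lt_succ_iff.mp (mem_range.mp hk)), mul_comm]
    rw [Finset.sum_congr rfl hcg]
    apply Finset.sum_le_sum_of_subset_of_nonneg (by gcongr <;> omega)
    intros; positivity
  have habsz : ∀ m : ℕ, ‖(r:ℂ) * rootP P ^ m‖ < 1 := by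
    intro m
    rw [norm_mul, norm_pow, abs_rootP, one_pow, mul_one, Complex.norm_real, Real.norm_eq_abs, abs_of_pos hr0]
    exact hr1
  have hqsum : ∑ k ∈ range P, ‖(qPoly N).coeff k‖ ^ 2 * r ^ (2 * k) ≤ (1 - r ^ 2)⁻¹ := by
    calc ∑ k ∈ range P, ‖(qPoly N).coeff k‖ ^ 2 * r ^ (2 * k)
        ≤ ∑ k ∈ range P, (r ^ 2) ^ k := by
          apply Finset.sum_le_sum
          intro k _
          rw [qPoly_coeff, ← pow_mul]
          split
          · simp
          · simp [pow_mul]; positivity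
      _ ≤ (1 - r ^ 2)⁻¹ := geom_bound r hr0 hr1 P
  have key : (P:ℝ) * ∑ k ∈ range P, ‖g.coeff k‖ ^ 2 * r ^ (2 * k)
      ≤ (P:ℝ) * ((1 - r ^ 2)⁻¹ * M ^ 2) := by
    rw [← hpar_g]
    have hpt : ∀ m ∈ range P, ‖g.eval ((r:ℂ) * rootP P ^ m)‖ ^ 2
        ≤ M ^ 2 * ‖(qPoly N).eval ((r:ℂ) * rootP P ^ m)‖ ^ 2 := by
      intro m _
      rw [hg, eval_mul, norm_mul, mul_pow]
      apply mul_le_mul_of_nonneg_right _ (sq_nonneg _)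
      have := maxmod d a _ (habsz m)
      exact pow_le_pow_left₀ (norm_nonneg _) this 2
    calc ∑ m ∈ range P, ‖g.eval ((r:ℂ) * rootP P ^ m)‖ ^ 2
        ≤ ∑ m ∈ range P, M ^ 2 * ‖(qPoly N).eval ((r:ℂ) * rootP P ^ m)‖ ^ 2 :=
          Finset.sum_le_sum hpt
      _ = M ^ 2 * ((P:ℝ) * ∑ k ∈ range P, ‖(qPoly N).coeff k‖ ^ 2 * r ^ (2 * k)) := by
          rw [← Finset.mul_sum, hpar_q]
      _ ≤ (P:ℝ) * ((1 - r ^ 2)⁻¹ * M ^ 2) := by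
          have hM0 : (0:ℝ) ≤ M ^ 2 := sq_nonneg _
          have hP0 : (0:ℝ) ≤ P := Nat.cast_nonneg _
          nlinarith [mul_le_mul_of_nonneg_left hqsum (mul_nonneg hP0 hM0)]
  have hPpos : (0:ℝ) < P := by exact_mod_cast hP
  have := le_of_mul_le_mul_left key hPpos
  exact le_trans step1 this

/-- For an analytic polynomial `f(z) = Σ a_k z^k` and `0 < r < 1`,
`Σ_{k≥0} r^{2k} |Σ_{j=0}^k a_j|² ≤ (1 − r²)⁻¹ ‖f‖²_{H∞}`. -/
theorem weighted_square_sum_of_partial_sums_le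
    (d : ℕ) (a : ℕ → ℂ) (ha : ∀ k : ℕ, d < k → a k = 0)
    (r : ℝ) (hr0 : 0 < r) (hr1 : r < 1) :
    ∑' k : ℕ, r ^ (2 * k) * ‖∑ j ∈ Finset.range (k + 1), a j‖ ^ 2 ≤
      (1 - r ^ 2)⁻¹ * (supNormT1 d a) ^ 2 := by
  classical
  set B : ℝ := ∑ j ∈ Finset.range (d + 1), ‖a j‖ with hB
  have hSk : ∀ k : ℕ, ‖∑ j ∈ Finset.range (k + 1), a j‖ ≤ B := by
    intro k
    calc ‖∑ j ∈ Finset.range (k + 1), a j‖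
        ≤ ∑ j ∈ Finset.range (k + 1), ‖a j‖ :=
          norm_sum_le _ _
      _ ≤ ∑ j ∈ Finset.range (k + d + 1), ‖a j‖ :=
          Finset.sum_le_sum_of_subset_of_nonneg
            (Finset.range_subset_range.mpr (by omega)) (fun j _ _ => norm_nonneg _)
      _ = B := by
          rw [hB]
          symm
          apply Finset.sum_subset (Finset.range_subset_range.mpr (by omega))
          intro j hj hjd
          rw [ha j (by simp at hjd; omega), norm_zero]
  have hr2 : r ^ 2 < 1 := by nlinarith
  have hnn : ∀ k : ℕ, 0 ≤ r ^ (2 * k) * (‖∑ j ∈ Finset.range (k + 1), a j‖) ^ 2 := by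
    intro k; positivity
  have hle : ∀ k : ℕ, r ^ (2 * k) * (‖∑ j ∈ Finset.range (k + 1), a j‖) ^ 2
      ≤ B ^ 2 * (r ^ 2) ^ k := by
    intro k
    rw [pow_mul, mul_comm]
    apply mul_le_mul_of_nonneg_right _ (by positivity)
    exact pow_le_pow_left₀ (norm_nonneg _) (hSk k) 2
  have hgs : Summable (fun k : ℕ => B ^ 2 * (r ^ 2) ^ k) :=
    (summable_geometric_of_lt_one (sq_nonneg r) hr2).mul_left _
  have hsum : Summable (fun k : ℕ => r ^ (2 * k) * (‖∑ j ∈ Finset.range (k + 1), a j‖) ^ 2) :=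
    Summable.of_nonneg_of_le hnn hle hgs
  apply Summable.tsum_le_of_sum_range_le hsum
  intro n
  cases n with
  | zero =>
      simp only [Finset.range_zero, Finset.sum_empty]
      have h1 : (0:ℝ) ≤ 1 - r ^ 2 := by nlinarith
      positivity
  | succ N => exact core d a ha r hr0 hr1 N
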